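/- Let n ≥ 2. In D_{2n} = ⟨a, s : a^{2n} = s^2 = (as)^2 = 1⟩, the tuple (s, s, as, a^3 s, a^2) is a generating vector of type (0; 2,2,2,2,n): the five elements generate D_{2n}, the first four have order 2, the fifth has order n, and their product is the identity. -/

import Mathlib

open DihedralGroup

/-- For `n ≥ 2`, the tuple `(s, s, as, a^3 s, a^2)` is a generating vector of
`D_{2n}` of type `(0; 2,2,2,2,n)`. -/
theorem stmt_8 (n : ℕ) (hn : 2 ≤ n) :
    orderOf (sr 0 : DihedralGroup (2 * n)) = 2 ∧
    orderOf ((r 1 : DihedralGroup (2 * n)) * sr 0) = 2 ∧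
    orderOf ((r 1 : DihedralGroup (2 * n)) ^ 3 * sr 0) = 2 ∧
    orderOf ((r 1 : DihedralGroup (2 * n)) ^ 2) = n ∧
    (sr 0 : DihedralGroup (2 * n)) * sr 0 * (r 1 * sr 0) * ((r 1) ^ 3 * sr 0) *
        (r 1) ^ 2 = 1 ∧
    Subgroup.closure
        ({(sr 0 : DihedralGroup (2 * n)), r 1 * sr 0, (r 1) ^ 3 * sr 0, (r 1) ^ 2} :
          Set (DihedralGroup (2 * n))) = ⊤ := by
  haveI : NeZero (2 * n) := ⟨by omega⟩
  refine ⟨orderOf_sr 0, ?_, ?_, ?_, ?_, ?_⟩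
  · rw [r_mul_sr]; exact orderOf_sr _
  · have h : (r 1 : DihedralGroup (2 * n)) ^ 3 = r 3 := by
      simp [pow_succ, r_mul_r]; ring_nf
    rw [h, r_mul_sr]; exact orderOf_sr _
  · rw [orderOf_pow, orderOf_r_one]
    have h2 : Nat.gcd (2 * n) 2 = 2 := by
      simpa using Nat.gcd_mul_left 2 n 1
    rw [h2]; omega
  · simp [pow_succ, r_mul_r, r_mul_sr, sr_mul_sr, sr_mul_r, one_def, -r_zero]
  · rw [eq_top_iff]
    rintro x -
    set H := Subgroup.closure
        ({(sr 0 : DihedralGroup (2 * n)), r 1 * sr 0, (r 1) ^ 3 * sr 0, (r 1) ^ 2} :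
          Set (DihedralGroup (2 * n)))
    have hs : (sr 0 : DihedralGroup (2 * n)) ∈ H := Subgroup.subset_closure (by simp)
    have hrs : (r 1 : DihedralGroup (2 * n)) * sr 0 ∈ H := Subgroup.subset_closure (by simp)
    have h1 : (r 1 : DihedralGroup (2 * n)) ∈ H := by
      have := mul_mem hrs hs
      simpa [mul_assoc, sr_mul_self] using this
    have hr : ∀ i : ZMod (2 * n), (r i : DihedralGroup (2 * n)) ∈ H := by
      intro i
      have : (r 1 : DihedralGroup (2 * n)) ^ (i.val) = r i := by
        rw [r_one_pow, ZMod.natCast_val, ZMod.cast_id]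
      exact this ▸ pow_mem h1 i.val
    cases x with
    | r i => exact hr i
    | sr i =>
      have : (sr 0 : DihedralGroup (2 * n)) * r i = sr i := by rw [sr_mul_r, zero_add]
      exact this ▸ mul_mem hs (hr i)
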